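/- Let G be a finite abelian group, μ a probability measure on G, and f ∈ L²(μ) with f ≢ 0. Write L_f = ‖f‖_{L²(μ)}/‖f‖_{L¹(μ)}. Then any subset Λ of Spec_ε(f,μ) := {γ ∈ Ĝ : |(f dμ)^(γ)| ≥ ε‖f‖_{L¹(μ)}} that is 1-dissociated with respect to μ has size O(ε⁻² log(2L_f)). -/

import Mathlib

set_option maxHeartbeats 2000000


open Finset

private lemma chang_exp_aux {v : ℝ} (hv : |v| ≤ 1/7) :
    Real.exp v ≤ (1 + v) * Real.exp (v ^ 2) := by
  obtain ⟨hv1, hv2⟩ := abs_le.1 hv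
  have key : Real.exp (v - v ^ 2) ≤ 1 + v := by
    have habs : |v - v ^ 2| ≤ 1 := by
      rw [abs_le]; constructor <;> nlinarith
    have h := Real.exp_bound habs (n := 2) (by norm_num)
    have hsum : ∑ m ∈ Finset.range 2, (v - v ^ 2) ^ m / m.factorial
        = 1 + (v - v ^ 2) := by
      simp [Finset.sum_range_succ]
    rw [hsum] at h
    have h2 := (abs_le.1 h).2
    have h3 : |v - v ^ 2| ^ 2 = (v - v ^ 2) ^ 2 := sq_abs _
    rw [h3] at h2
    norm_num [Nat.factorial] at h2
    have ha : (0:ℝ) ≤ v ^ 2 * (1/7 - v) := mul_nonneg (sq_nonneg v) (by linarith)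
    have hb : (0:ℝ) ≤ v ^ 2 * (1/7 + v) := mul_nonneg (sq_nonneg v) (by linarith)
    have hc : (0:ℝ) ≤ v ^ 2 * ((1/7 + v) * (1/7 - v)) :=
      mul_nonneg (sq_nonneg v) (mul_nonneg (by linarith) (by linarith))
    nlinarith [sq_nonneg v, ha, hb, hc]
  calc Real.exp v = Real.exp (v - v ^ 2) * Real.exp (v ^ 2) := by
        rw [← Real.exp_add]; ring_nf
    _ ≤ (1 + v) * Real.exp (v ^ 2) := by
        exact mul_le_mul_of_nonneg_right key (Real.exp_pos _).le

private lemma chang_cs {ι : Type*} (s : Finset ι) (a b w : ι → ℝ)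
    (ha : ∀ i, 0 ≤ a i) (hb : ∀ i, 0 ≤ b i) (hw : ∀ i, 0 ≤ w i) :
    ∑ i ∈ s, a i * b i * w i ≤
      Real.sqrt (∑ i ∈ s, a i ^ 2 * w i) * Real.sqrt (∑ i ∈ s, b i ^ 2 * w i) := by
  have key := sum_mul_sq_le_sq_mul_sq s (fun i => a i * Real.sqrt (w i))
      (fun i => b i * Real.sqrt (w i))
  have e1 : ∀ i ∈ s, (a i * Real.sqrt (w i)) * (b i * Real.sqrt (w i))
      = a i * b i * w i := by
    intro i _; rw [mul_mul_mul_comm, Real.mul_self_sqrt (hw i)]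
  have e2 : ∀ i ∈ s, (a i * Real.sqrt (w i)) ^ 2 = a i ^ 2 * w i := by
    intro i _; rw [mul_pow, Real.sq_sqrt (hw i)]
  have e3 : ∀ i ∈ s, (b i * Real.sqrt (w i)) ^ 2 = b i ^ 2 * w i := by
    intro i _; rw [mul_pow, Real.sq_sqrt (hw i)]
  rw [Finset.sum_congr rfl e1, Finset.sum_congr rfl e2, Finset.sum_congr rfl e3] at key
  have hL : 0 ≤ ∑ i ∈ s, a i * b i * w i :=
    Finset.sum_nonneg fun i _ => by
      have := ha i; have := hb i; have := hw i; positivity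
  have hA : 0 ≤ ∑ i ∈ s, a i ^ 2 * w i :=
    Finset.sum_nonneg fun i _ => by have := hw i; positivity
  calc ∑ i ∈ s, a i * b i * w i
      = Real.sqrt ((∑ i ∈ s, a i * b i * w i) ^ 2) := (Real.sqrt_sq hL).symm
    _ ≤ Real.sqrt ((∑ i ∈ s, a i ^ 2 * w i) * ∑ i ∈ s, b i ^ 2 * w i) :=
        Real.sqrt_le_sqrt key
    _ = _ := Real.sqrt_mul hA _

/-- The Chang bound: any `1`-dissociated (w.r.t. `μ`) subset of the `ε`-spectrum of `f`
w.r.t. `μ` has size `O(ε⁻² log (2 L_f))` where `L_f = ‖f‖_{L²(μ)}/‖f‖_{L¹(μ)}`. -/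
theorem chang_bound :
    ∃ C : ℝ, 0 < C ∧
      ∀ (G : Type) [AddCommGroup G] [Fintype G] (μ : G → ℝ) (f : G → ℂ) (ε : ℝ),
        (∀ x, 0 ≤ μ x) → ∑ x, μ x = 1 → 0 < ε → ε ≤ 1 →
        (∃ x, μ x ≠ 0 ∧ f x ≠ 0) →
        ∀ Λ : Finset (AddChar G ℂ),
          -- Λ is contained in Spec_ε(f, μ):
          (∀ γ ∈ Λ, ε * ∑ x, ‖f x‖ * μ x ≤
              ‖∑ x, f x * starRingEnd ℂ (γ x) * μ x‖) →
          -- Λ is 1-dissociated w.r.t. μ: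
          (∀ ω : AddChar G ℂ → ℂ, (∀ γ ∈ Λ, ‖ω γ‖ ≤ 1) →
              ∑ x, (∏ γ ∈ Λ, (1 + (ω γ * γ x).re)) * μ x ≤ Real.exp 1) →
          (Λ.card : ℝ) ≤ C * ε⁻¹ ^ 2 *
            Real.log (2 * Real.sqrt (∑ x, ‖f x‖ ^ 2 * μ x) /
              (∑ x, ‖f x‖ * μ x)) := by
  refine ⟨100, by norm_num, ?_⟩
  intro G _ _ μ f ε hμ hμ1 hε hε1 hex Λ hSpec hDiss
  obtain ⟨x₀, hx₀μ, hx₀f⟩ := hex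
  set m : ℝ := (Λ.card : ℝ) with hm
  set N1 := ∑ x, ‖f x‖ * μ x with hN1def
  set N2 := Real.sqrt (∑ x, ‖f x‖ ^ 2 * μ x) with hN2def
  have hN1pos : 0 < N1 := by
    refine Finset.sum_pos' (fun x _ => mul_nonneg (norm_nonneg _) (hμ x)) ?_
    exact ⟨x₀, Finset.mem_univ _,
      mul_pos (norm_pos_iff.mpr hx₀f) ((hμ x₀).lt_of_ne (Ne.symm hx₀μ))⟩
  have hN2sqpos : 0 < ∑ x, ‖f x‖ ^ 2 * μ x := by
    refine Finset.sum_pos' (fun x _ => mul_nonneg (by positivity) (hμ x)) ?_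
    exact ⟨x₀, Finset.mem_univ _,
      mul_pos (pow_pos (norm_pos_iff.mpr hx₀f) 2) ((hμ x₀).lt_of_ne (Ne.symm hx₀μ))⟩
  have hN2pos : 0 < N2 := Real.sqrt_pos.2 hN2sqpos
  -- the "Fourier coefficients" and phases
  set g : AddChar G ℂ → ℂ := fun γ => ∑ x, f x * starRingEnd ℂ (γ x) * μ x with hgdef
  have hg : ∀ γ ∈ Λ, ε * N1 ≤ ‖g γ‖ := hSpec
  have hgne : ∀ γ ∈ Λ, g γ ≠ 0 := by
    intro γ hγ
    have h1 : 0 < ε * N1 := mul_pos hε hN1pos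
    have := hg γ hγ
    intro h0
    rw [h0] at this; simp at this; linarith
  set c : AddChar G ℂ → ℂ := fun γ => g γ / (‖g γ‖ : ℂ) with hcdef
  have hcabs : ∀ γ, g γ ≠ 0 → ‖c γ‖ = 1 := by
    intro γ h0
    rw [show c γ = g γ / (‖g γ‖ : ℂ) from rfl, norm_div, Complex.norm_real, Real.norm_eq_abs,
      abs_of_nonneg (norm_nonneg (g γ)), div_self (norm_pos_iff.mpr h0).ne']
  have hcle : ∀ γ, ‖c γ‖ ≤ 1 := by
    intro γ
    by_cases h0 : g γ = 0
    · rw [show c γ = g γ / (‖g γ‖ : ℂ) from rfl, h0]; simp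
    · rw [hcabs γ h0]
  have hceq : ∀ γ ∈ Λ, ‖c γ‖ = 1 := fun γ hγ => hcabs γ (hgne γ hγ)
  set A : G → ℂ := fun x => ∑ γ ∈ Λ, c γ * γ x with hAdef
  have hcharnorm : ∀ (γ : AddChar G ℂ) (x : G), ‖γ x‖ = 1 := by
    intro γ x
    exact AddChar.norm_apply γ x
  -- Step 1 : m * ε * N1 ≤ ∑ |f| |A| μ
  have hkey : ∀ γ ∈ Λ, starRingEnd ℂ (c γ) * g γ = (‖g γ‖ : ℂ) := by
    intro γ hγ
    have hne : (‖g γ‖ : ℝ) ≠ 0 := (norm_pos_iff.mpr (hgne γ hγ)).ne'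
    have h1 : starRingEnd ℂ (g γ) * g γ = ((‖g γ‖ ^ 2 : ℝ) : ℂ) := by
      rw [mul_comm, Complex.mul_conj, Complex.normSq_eq_norm_sq]
    rw [hcdef]
    simp only [map_div₀, Complex.conj_ofReal]
    rw [div_mul_eq_mul_div, h1]
    push_cast
    rw [sq, mul_div_assoc, div_self (by exact_mod_cast hne), mul_one]
  set S := ∑ x, ‖f x‖ * ‖A x‖ * μ x with hSdef
  have hstep1 : m * ε * N1 ≤ S := by
    have h1 : m * (ε * N1) = ∑ _γ ∈ Λ, ε * N1 := by
      rw [Finset.sum_const, nsmul_eq_mul, hm]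
    have h2 : ∑ _γ ∈ Λ, ε * N1 ≤ ∑ γ ∈ Λ, ‖g γ‖ :=
      Finset.sum_le_sum hg
    have h3 : (∑ γ ∈ Λ, (‖g γ‖ : ℂ)) = ∑ x, f x * starRingEnd ℂ (A x) * μ x := by
      calc ∑ γ ∈ Λ, (‖g γ‖ : ℂ)
          = ∑ γ ∈ Λ, starRingEnd ℂ (c γ) * g γ :=
            Finset.sum_congr rfl fun γ hγ => (hkey γ hγ).symm
        _ = ∑ γ ∈ Λ, ∑ x, f x * starRingEnd ℂ (c γ * γ x) * μ x := by
            refine Finset.sum_congr rfl fun γ _ => ?_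
            rw [hgdef]
            simp only
            rw [Finset.mul_sum]
            refine Finset.sum_congr rfl fun x _ => ?_
            rw [map_mul]; ring
        _ = ∑ x, ∑ γ ∈ Λ, f x * starRingEnd ℂ (c γ * γ x) * μ x := Finset.sum_comm
        _ = ∑ x, f x * starRingEnd ℂ (A x) * μ x := by
            refine Finset.sum_congr rfl fun x _ => ?_
            rw [hAdef]
            simp only
            rw [map_sum, Finset.mul_sum, Finset.sum_mul]
    have h4 : ∑ γ ∈ Λ, ‖g γ‖ = (∑ x, f x * starRingEnd ℂ (A x) * μ x).re := by
      rw [← h3, Complex.re_sum]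
      exact Finset.sum_congr rfl fun γ _ => by simp
    have h5 : (∑ x, f x * starRingEnd ℂ (A x) * μ x).re ≤ S := by
      rw [Complex.re_sum, hSdef]
      refine Finset.sum_le_sum fun x _ => ?_
      have hre : (f x * starRingEnd ℂ (A x) * (μ x : ℂ)).re
          = (f x * starRingEnd ℂ (A x)).re * μ x := by
        simp [Complex.mul_re, Complex.ofReal_re, Complex.ofReal_im]
      rw [hre]
      refine mul_le_mul_of_nonneg_right ?_ (hμ x)
      calc (f x * starRingEnd ℂ (A x)).re ≤ ‖f x * starRingEnd ℂ (A x)‖ :=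
            Complex.re_le_norm _
        _ = ‖f x‖ * ‖A x‖ := by rw [norm_mul, Complex.norm_conj]
    calc m * ε * N1 = m * (ε * N1) := by ring
      _ ≤ ∑ γ ∈ Λ, ‖g γ‖ := by rw [h1] at *; exact h2
      _ ≤ S := by rw [h4]; exact h5
  -- Step 2 : exponential moments
  have hmoment : ∀ u : ℂ, ‖u‖ = 1 → ∀ s : ℝ, 0 ≤ s → s ≤ 1/7 →
      ∑ x, Real.exp (s * (u * A x).re) * μ x ≤ Real.exp (1 + s ^ 2 * m) := by
    intro u hu s hs0 hs7
    set ω : AddChar G ℂ → ℂ := fun γ => (s : ℂ) * u * c γ with hωdef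
    have hωabs : ∀ γ ∈ Λ, ‖ω γ‖ = s := by
      intro γ hγ
      rw [hωdef]
      simp only [norm_mul, Complex.norm_real, Real.norm_eq_abs, hu, hceq γ hγ, abs_of_nonneg hs0]
      ring
    have hωle : ∀ γ ∈ Λ, ‖ω γ‖ ≤ 1 := by
      intro γ hγ; rw [hωabs γ hγ]; linarith
    have hpt : ∀ x, Real.exp (s * (u * A x).re) ≤
        (∏ γ ∈ Λ, (1 + (ω γ * γ x).re)) * Real.exp (s ^ 2 * m) := by
      intro x
      have hexpand : s * (u * A x).re = ∑ γ ∈ Λ, (ω γ * γ x).re := by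
        rw [hAdef]
        simp only
        rw [Finset.mul_sum, Complex.re_sum, Finset.mul_sum]
        refine Finset.sum_congr rfl fun γ _ => ?_
        rw [hωdef]
        simp only
        rw [show (s:ℂ) * u * c γ * γ x = (s:ℂ) * (u * (c γ * γ x)) by ring,
          Complex.re_ofReal_mul]
      rw [hexpand, Real.exp_sum]
      have hterm : ∀ γ ∈ Λ, Real.exp ((ω γ * γ x).re) ≤
          (1 + (ω γ * γ x).re) * Real.exp (s ^ 2) := by
        intro γ hγ
        set v := (ω γ * γ x).re with hv
        have hvb : |v| ≤ s := by
          calc |v| ≤ ‖ω γ * γ x‖ := Complex.abs_re_le_norm _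
            _ = s := by rw [norm_mul, hωabs γ hγ, hcharnorm γ x, mul_one]
        have h1 := chang_exp_aux (v := v) (le_trans hvb hs7)
        have h2 : Real.exp (v ^ 2) ≤ Real.exp (s ^ 2) := by
          apply Real.exp_le_exp.2
          calc v ^ 2 = |v| ^ 2 := (sq_abs _).symm
            _ ≤ s ^ 2 := by nlinarith [abs_nonneg v]
        have h1v : (0:ℝ) ≤ 1 + v := by
          have := (abs_le.1 hvb).1; linarith
        calc Real.exp v ≤ (1 + v) * Real.exp (v ^ 2) := h1
          _ ≤ (1 + v) * Real.exp (s ^ 2) := mul_le_mul_of_nonneg_left h2 h1v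
      calc ∏ γ ∈ Λ, Real.exp ((ω γ * γ x).re)
          ≤ ∏ γ ∈ Λ, ((1 + (ω γ * γ x).re) * Real.exp (s ^ 2)) :=
            Finset.prod_le_prod (fun γ _ => (Real.exp_pos _).le) hterm
        _ = (∏ γ ∈ Λ, (1 + (ω γ * γ x).re)) * Real.exp (s ^ 2) ^ Λ.card := by
            rw [Finset.prod_mul_distrib, Finset.prod_const]
        _ = (∏ γ ∈ Λ, (1 + (ω γ * γ x).re)) * Real.exp (s ^ 2 * m) := by
            rw [← Real.exp_nat_mul]; congr 1; rw [hm]; ring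
    calc ∑ x, Real.exp (s * (u * A x).re) * μ x
        ≤ ∑ x, ((∏ γ ∈ Λ, (1 + (ω γ * γ x).re)) * Real.exp (s ^ 2 * m)) * μ x := by
          refine Finset.sum_le_sum fun x _ => ?_
          exact mul_le_mul_of_nonneg_right (hpt x) (hμ x)
      _ = Real.exp (s ^ 2 * m) * ∑ x, (∏ γ ∈ Λ, (1 + (ω γ * γ x).re)) * μ x := by
          rw [Finset.mul_sum]
          exact Finset.sum_congr rfl fun x _ => by ring
      _ ≤ Real.exp (s ^ 2 * m) * Real.exp 1 :=
          mul_le_mul_of_nonneg_left (hDiss ω hωle) (Real.exp_pos _).le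
      _ = Real.exp (1 + s ^ 2 * m) := by rw [← Real.exp_add]; ring_nf
  -- parameter t
  set t := ε / 32 with htdef
  have ht0 : 0 < t := by positivity
  have ht4 : 4 * t ≤ 1/7 := by rw [htdef]; linarith
  have ht4' : (0:ℝ) ≤ 4 * t := by linarith
  -- directional bounds
  have hRe : ∑ x, Real.exp (4 * t * |(A x).re|) * μ x ≤ 2 * Real.exp (1 + 16 * t ^ 2 * m) := by
    have h1 := hmoment 1 (by simp) (4 * t) ht4' ht4
    have h2 := hmoment (-1) (by simp) (4 * t) ht4' ht4
    have e1 : ∀ x, ((1:ℂ) * A x).re = (A x).re := fun x => by rw [one_mul]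
    have e2 : ∀ x, ((-1:ℂ) * A x).re = -(A x).re := fun x => by
      rw [neg_one_mul, Complex.neg_re]
    have hpt : ∀ x, Real.exp (4 * t * |(A x).re|) ≤
        Real.exp (4 * t * (A x).re) + Real.exp (4 * t * (-(A x).re)) := by
      intro x
      rcases abs_cases (A x).re with ⟨h, _⟩ | ⟨h, _⟩
      · rw [h]; nlinarith [Real.exp_pos (4 * t * (-(A x).re))]
      · rw [h]; nlinarith [Real.exp_pos (4 * t * (A x).re)]
    have hexp2 : (4 * t) ^ 2 = 16 * t ^ 2 := by ring
    calc ∑ x, Real.exp (4 * t * |(A x).re|) * μ x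
        ≤ ∑ x, (Real.exp (4 * t * (A x).re) + Real.exp (4 * t * (-(A x).re))) * μ x := by
          refine Finset.sum_le_sum fun x _ => mul_le_mul_of_nonneg_right (hpt x) (hμ x)
      _ = (∑ x, Real.exp (4 * t * ((1:ℂ) * A x).re) * μ x)
          + ∑ x, Real.exp (4 * t * ((-1:ℂ) * A x).re) * μ x := by
          rw [← Finset.sum_add_distrib]
          refine Finset.sum_congr rfl fun x _ => ?_
          rw [e1 x, e2 x]; ring
      _ ≤ Real.exp (1 + (4*t) ^ 2 * m) + Real.exp (1 + (4*t) ^ 2 * m) := add_le_add h1 h2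
      _ = 2 * Real.exp (1 + 16 * t ^ 2 * m) := by rw [hexp2]; ring
  have hIm : ∑ x, Real.exp (4 * t * |(A x).im|) * μ x ≤ 2 * Real.exp (1 + 16 * t ^ 2 * m) := by
    have h1 := hmoment (-Complex.I) (by simp) (4 * t) ht4' ht4
    have h2 := hmoment Complex.I (by simp) (4 * t) ht4' ht4
    have e1 : ∀ x, ((-Complex.I) * A x).re = (A x).im := fun x => by
      simp [Complex.mul_re, Complex.I_re, Complex.I_im]
    have e2 : ∀ x, (Complex.I * A x).re = -(A x).im := fun x => by
      simp [Complex.mul_re, Complex.I_re, Complex.I_im]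
    have hpt : ∀ x, Real.exp (4 * t * |(A x).im|) ≤
        Real.exp (4 * t * (A x).im) + Real.exp (4 * t * (-(A x).im)) := by
      intro x
      rcases abs_cases (A x).im with ⟨h, _⟩ | ⟨h, _⟩
      · rw [h]; nlinarith [Real.exp_pos (4 * t * (-(A x).im))]
      · rw [h]; nlinarith [Real.exp_pos (4 * t * (A x).im)]
    have hexp2 : (4 * t) ^ 2 = 16 * t ^ 2 := by ring
    calc ∑ x, Real.exp (4 * t * |(A x).im|) * μ x
        ≤ ∑ x, (Real.exp (4 * t * (A x).im) + Real.exp (4 * t * (-(A x).im))) * μ x := by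
          refine Finset.sum_le_sum fun x _ => mul_le_mul_of_nonneg_right (hpt x) (hμ x)
      _ = (∑ x, Real.exp (4 * t * ((-Complex.I) * A x).re) * μ x)
          + ∑ x, Real.exp (4 * t * (Complex.I * A x).re) * μ x := by
          rw [← Finset.sum_add_distrib]
          refine Finset.sum_congr rfl fun x _ => ?_
          rw [e1 x, e2 x]; ring
      _ ≤ Real.exp (1 + (4*t) ^ 2 * m) + Real.exp (1 + (4*t) ^ 2 * m) := add_le_add h1 h2
      _ = 2 * Real.exp (1 + 16 * t ^ 2 * m) := by rw [hexp2]; ring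
  -- Step 3
  have hstep3 : ∑ x, Real.exp (2 * t * ‖A x‖) * μ x
      ≤ 2 * Real.exp (1 + 16 * t ^ 2 * m) := by
    have hcs := chang_cs Finset.univ (fun x => Real.exp (2 * t * |(A x).re|))
        (fun x => Real.exp (2 * t * |(A x).im|)) μ
        (fun x => (Real.exp_pos _).le) (fun x => (Real.exp_pos _).le) hμ
    have esq1 : ∀ x : G, Real.exp (2 * t * |(A x).re|) ^ 2 = Real.exp (4 * t * |(A x).re|) := by
      intro x; rw [← Real.exp_nat_mul]; ring_nf
    have esq2 : ∀ x : G, Real.exp (2 * t * |(A x).im|) ^ 2 = Real.exp (4 * t * |(A x).im|) := by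
      intro x; rw [← Real.exp_nat_mul]; ring_nf
    have hpt : ∀ x, Real.exp (2 * t * ‖A x‖) ≤
        Real.exp (2 * t * |(A x).re|) * Real.exp (2 * t * |(A x).im|) := by
      intro x
      rw [← Real.exp_add]
      apply Real.exp_le_exp.2
      have h := Complex.norm_le_abs_re_add_abs_im (A x)
      nlinarith
    have h2e : (0:ℝ) ≤ 2 * Real.exp (1 + 16 * t ^ 2 * m) := by positivity
    calc ∑ x, Real.exp (2 * t * ‖A x‖) * μ x
        ≤ ∑ x, Real.exp (2 * t * |(A x).re|) * Real.exp (2 * t * |(A x).im|) * μ x := by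
          refine Finset.sum_le_sum fun x _ => mul_le_mul_of_nonneg_right (hpt x) (hμ x)
      _ ≤ Real.sqrt (∑ x, Real.exp (2 * t * |(A x).re|) ^ 2 * μ x) *
          Real.sqrt (∑ x, Real.exp (2 * t * |(A x).im|) ^ 2 * μ x) := hcs
      _ = Real.sqrt (∑ x, Real.exp (4 * t * |(A x).re|) * μ x) *
          Real.sqrt (∑ x, Real.exp (4 * t * |(A x).im|) * μ x) := by
          have hsA : ∑ x, Real.exp (2 * t * |(A x).re|) ^ 2 * μ x
              = ∑ x, Real.exp (4 * t * |(A x).re|) * μ x :=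
            Finset.sum_congr rfl fun x _ => by rw [esq1 x]
          have hsB : ∑ x, Real.exp (2 * t * |(A x).im|) ^ 2 * μ x
              = ∑ x, Real.exp (4 * t * |(A x).im|) * μ x :=
            Finset.sum_congr rfl fun x _ => by rw [esq2 x]
          rw [hsA, hsB]
      _ ≤ Real.sqrt (2 * Real.exp (1 + 16 * t ^ 2 * m)) *
          Real.sqrt (2 * Real.exp (1 + 16 * t ^ 2 * m)) := by
          refine mul_le_mul (Real.sqrt_le_sqrt hRe) (Real.sqrt_le_sqrt hIm)
            (Real.sqrt_nonneg _) (Real.sqrt_nonneg _)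
      _ = 2 * Real.exp (1 + 16 * t ^ 2 * m) := Real.mul_self_sqrt h2e
  -- Step 4
  set E := ∑ x, ‖f x‖ * Real.exp (t * ‖A x‖) * μ x with hEdef
  have hstep4 : E ≤ N2 * Real.sqrt (2 * Real.exp (1 + 16 * t ^ 2 * m)) := by
    have hcs := chang_cs Finset.univ (fun x => ‖f x‖)
        (fun x => Real.exp (t * ‖A x‖)) μ
        (fun x => norm_nonneg _) (fun x => (Real.exp_pos _).le) hμ
    have esq : ∀ x : G, Real.exp (t * ‖A x‖) ^ 2
        = Real.exp (2 * t * ‖A x‖) := by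
      intro x; rw [← Real.exp_nat_mul]; ring_nf
    calc E ≤ Real.sqrt (∑ x, ‖f x‖ ^ 2 * μ x) *
          Real.sqrt (∑ x, Real.exp (t * ‖A x‖) ^ 2 * μ x) := hcs
      _ = N2 * Real.sqrt (∑ x, Real.exp (2 * t * ‖A x‖) * μ x) := by
          have hsC : ∑ x, Real.exp (t * ‖A x‖) ^ 2 * μ x
              = ∑ x, Real.exp (2 * t * ‖A x‖) * μ x :=
            Finset.sum_congr rfl fun x _ => by rw [esq x]
          rw [hN2def, hsC]
      _ ≤ N2 * Real.sqrt (2 * Real.exp (1 + 16 * t ^ 2 * m)) :=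
          mul_le_mul_of_nonneg_left (Real.sqrt_le_sqrt hstep3) hN2pos.le
  -- Step 5 : linearization
  set U := N2 * Real.sqrt (2 * Real.exp (1 + 16 * t ^ 2 * m)) with hUdef
  have hsq2pos : (0:ℝ) < Real.sqrt (2 * Real.exp (1 + 16 * t ^ 2 * m)) :=
    Real.sqrt_pos.2 (by positivity)
  have hUpos : 0 < U := mul_pos hN2pos hsq2pos
  set cc := Real.log (U / N1) with hccdef
  have hexpneg : Real.exp (-cc) = N1 / U := by
    rw [hccdef, ← Real.log_inv, Real.exp_log (by exact inv_pos.2 (div_pos hUpos hN1pos)), inv_div]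
  have hptlin : ∀ x : G, t * ‖A x‖ ≤
      (cc - 1) + Real.exp (t * ‖A x‖) * (N1 / U) := by
    intro x
    have h := Real.add_one_le_exp (t * ‖A x‖ - cc)
    rw [Real.exp_sub, hccdef] at h
    have : Real.exp cc = U / N1 := Real.exp_log (div_pos hUpos hN1pos)
    rw [hccdef] at this
    rw [this] at h
    have hh : Real.exp (t * ‖A x‖) / (U / N1)
        = Real.exp (t * ‖A x‖) * (N1 / U) := by
      rw [div_eq_mul_inv, inv_div]
    rw [hh] at h
    linarith
  have h5 : t * S ≤ cc * N1 := by
    have hstep : ∑ x, ‖f x‖ * (t * ‖A x‖) * μ x ≤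
        ∑ x, ‖f x‖ * ((cc - 1) + Real.exp (t * ‖A x‖) * (N1 / U)) * μ x := by
      refine Finset.sum_le_sum fun x _ => ?_
      refine mul_le_mul_of_nonneg_right ?_ (hμ x)
      exact mul_le_mul_of_nonneg_left (hptlin x) (norm_nonneg _)
    have hL : t * S = ∑ x, ‖f x‖ * (t * ‖A x‖) * μ x := by
      rw [hSdef, Finset.mul_sum]
      exact Finset.sum_congr rfl fun x _ => by ring
    have hR : ∑ x, ‖f x‖ * ((cc - 1) + Real.exp (t * ‖A x‖) * (N1 / U)) * μ x
        = (cc - 1) * N1 + (N1 / U) * E := by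
      have e1 : ∀ x : G, ‖f x‖ *
          ((cc - 1) + Real.exp (t * ‖A x‖) * (N1 / U)) * μ x
          = (cc - 1) * (‖f x‖ * μ x) +
            (N1 / U) * (‖f x‖ * Real.exp (t * ‖A x‖) * μ x) :=
        fun x => by ring
      rw [Finset.sum_congr rfl fun x _ => e1 x, Finset.sum_add_distrib,
        ← Finset.mul_sum, ← Finset.mul_sum, ← hN1def, ← hEdef]
    have hend : (N1 / U) * E ≤ N1 := by
      calc (N1 / U) * E ≤ (N1 / U) * U :=
            mul_le_mul_of_nonneg_left hstep4 (div_nonneg hN1pos.le hUpos.le)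
        _ = N1 := div_mul_cancel₀ N1 hUpos.ne'
    calc t * S = ∑ x, ‖f x‖ * (t * ‖A x‖) * μ x := hL
      _ ≤ (cc - 1) * N1 + (N1 / U) * E := le_of_le_of_eq hstep hR
      _ ≤ (cc - 1) * N1 + N1 := by linarith
      _ = cc * N1 := by ring
  have hfin : t * (m * ε) ≤ cc := by
    have h1 : t * (m * ε * N1) ≤ t * S := mul_le_mul_of_nonneg_left hstep1 ht0.le
    have h2 : t * (m * ε * N1) ≤ cc * N1 := h1.trans h5
    have h3 : t * (m * ε) * N1 ≤ cc * N1 := by linarith [h2]; 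
    exact le_of_mul_le_mul_right (by linarith [h3]) hN1pos
  -- compute cc
  have hccval : cc = Real.log N2 - Real.log N1 + (Real.log 2 + (1 + 16 * t ^ 2 * m)) / 2 := by
    rw [hccdef, Real.log_div hUpos.ne' hN1pos.ne', hUdef,
      Real.log_mul hN2pos.ne' hsq2pos.ne',
      Real.log_sqrt (by positivity : (0:ℝ) ≤ 2 * Real.exp (1 + 16 * t ^ 2 * m)),
      Real.log_mul (by norm_num) (Real.exp_pos _).ne', Real.log_exp]
    ring
  set X := Real.log (2 * N2 / N1) with hXdef
  have hXeq : X = Real.log 2 + Real.log N2 - Real.log N1 := by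
    rw [hXdef, Real.log_div (mul_pos two_pos hN2pos).ne' hN1pos.ne',
      Real.log_mul (by norm_num) hN2pos.ne']
  have hN1N2 : N1 ≤ N2 := by
    have hcs := chang_cs Finset.univ (fun x => ‖f x‖) (fun _ => 1) μ
      (fun x => norm_nonneg _) (fun _ => zero_le_one) hμ
    have h1 : ∑ x, ‖f x‖ * 1 * μ x = N1 := by
      rw [hN1def]; exact Finset.sum_congr rfl fun x _ => by ring
    have h2 : ∑ x, (1:ℝ) ^ 2 * μ x = 1 := by
      calc ∑ x, (1:ℝ) ^ 2 * μ x = ∑ x, μ x := Finset.sum_congr rfl fun x _ => by ring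
        _ = 1 := hμ1
    rw [h1, h2, Real.sqrt_one, mul_one, ← hN2def] at hcs
    exact hcs
  have hlog2 : (1:ℝ)/2 ≤ Real.log 2 := by
    have := Real.log_two_gt_d9; linarith
  have hXge : (1:ℝ)/2 ≤ X := by
    have h2 : (2:ℝ) ≤ 2 * N2 / N1 := by
      rw [le_div_iff₀ hN1pos]; linarith
    calc (1:ℝ)/2 ≤ Real.log 2 := hlog2
      _ ≤ X := by rw [hXdef]; exact Real.log_le_log (by norm_num) h2
  clear_value X U cc t S E A c g N2 N1 m
  -- final arithmetic
  have hmain : (3:ℝ)/128 * (m * ε ^ 2) ≤ (3:ℝ)/2 * X := by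
    have h1 : t * (m * ε) = m * ε ^ 2 / 32 := by rw [htdef]; ring
    have h2 : 16 * t ^ 2 * m = m * ε ^ 2 / 64 := by rw [htdef]; ring
    rw [h1] at hfin
    rw [h2] at hccval
    have h3 : Real.log N2 - Real.log N1 = X - Real.log 2 := by rw [hXeq]; ring
    rw [h3] at hccval
    rw [hccval] at hfin
    -- m ε²/32 ≤ X - log2 + (log2 + 1 + mε²/64)/2
    nlinarith [hlog2, hXge]
  have hm0 : 0 ≤ m := by rw [hm]; exact Nat.cast_nonneg _
  have hX0 : 0 ≤ X := by linarith
  have hgoal : m ≤ 100 * ε⁻¹ ^ 2 * X := by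
    have hinv : ε⁻¹ ^ 2 * ε ^ 2 = 1 := by
      rw [← mul_pow, inv_mul_cancel₀ hε.ne', one_pow]
    have h64 : m * ε ^ 2 ≤ 64 * X := by nlinarith
    have hinvpos : 0 < ε⁻¹ ^ 2 := by positivity
    nlinarith [mul_le_mul_of_nonneg_left h64 hinvpos.le, sq_nonneg ε]
  exact hgoal
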